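/- Lemma (dual error bound for Perturbed GDA). Let f be ℓ-smooth and satisfy the standing assumptions, let r_y > 0 and α > 0, and let {(x_t, y_t)} be generated by Perturbed GDA. Then for every t ≥ 1: ‖ỹ*(x_t) − y_t‖ ≤ ((1 + α(ℓ + r_y))/(α·r_y))·‖y_t − y_{t−1}‖. -/

import Mathlib

open Set

noncomputable section

/-- Euclidean space `ℝ^m`. -/
abbrev Euc (m : ℕ) : Type := EuclideanSpace ℝ (Fin m)

/-- `P` is the metric projection onto the set `S`, characterized by
`⟨u − P u, s − P u⟩ ≤ 0` for all `s ∈ S`. -/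
def IsProjection {m : ℕ} (S : Set (Euc m)) (P : Euc m → Euc m) : Prop :=
  ∀ u, P u ∈ S ∧ ∀ s ∈ S, (inner ℝ (u - P u) (s - P u) : ℝ) ≤ 0

/-- `f` is `l`-smooth, witnessed by the partial gradient maps `gx`, `gy`. -/
def LSmooth {n d : ℕ} (f : Euc n → Euc d → ℝ) (gx : Euc n → Euc d → Euc n)
    (gy : Euc n → Euc d → Euc d) (l : ℝ) : Prop :=
  (∀ x y, HasGradientAt (fun x' => f x' y) (gx x y) x) ∧
  (∀ x y, HasGradientAt (fun y' => f x y') (gy x y) y) ∧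
  (∀ x x' y y', ‖gx x y - gx x' y'‖ ≤ l * (‖x - x'‖ + ‖y - y'‖)) ∧
  (∀ x x' y y', ‖gy x y - gy x' y'‖ ≤ l * (‖x - x'‖ + ‖y - y'‖))

/-- Standing assumptions: `X` closed convex; `Y` nonempty compact convex
containing `0` with diameter `Dy`; `f x` concave on `Y` for every `x ∈ X`. -/
def Standing {n d : ℕ} (f : Euc n → Euc d → ℝ) (X : Set (Euc n)) (Y : Set (Euc d))
    (Dy : ℝ) : Prop :=
  IsClosed X ∧ Convex ℝ X ∧ Y.Nonempty ∧ IsCompact Y ∧ Convex ℝ Y ∧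
    (0 : Euc d) ∈ Y ∧ Metric.diam Y = Dy ∧ ∀ x ∈ X, ConcaveOn ℝ Y (f x)

open Filter Topology

lemma line_hasDerivAt {m : ℕ} (y v : Euc m) :
    HasDerivAt (fun t : ℝ => y + t • v) v 0 := by
  simpa using ((hasDerivAt_id (0 : ℝ)).smul_const v).const_add y

lemma grad_line_hasDerivAt {m : ℕ} {f : Euc m → ℝ} {g : Euc m} (y : Euc m)
    (h : HasGradientAt f g y) (v : Euc m) :
    HasDerivAt (fun t : ℝ => f (y + t • v)) (inner ℝ g v : ℝ) 0 := by
  have h1 : HasFDerivAt f (InnerProductSpace.toDual ℝ (Euc m) g) (y + (0 : ℝ) • v) := by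
    simpa using h.hasFDerivAt
  have := h1.comp_hasDerivAt 0 (line_hasDerivAt y v)
  exact this

lemma deriv_le_of_slopes {φ : ℝ → ℝ} {dd m : ℝ} (h : HasDerivAt φ dd 0)
    (hm : ∀ t ∈ Set.Ioc (0:ℝ) 1, (φ t - φ 0) / t ≤ m) : dd ≤ m := by
  have hmem : Set.Ioc (0:ℝ) 1 ∈ 𝓝[>] (0:ℝ) := by
    rw [← Set.Ioi_inter_Iic]
    exact Filter.inter_mem self_mem_nhdsWithin
      (mem_nhdsWithin_of_mem_nhds (Iic_mem_nhds (by norm_num)))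
  have hs : Filter.Tendsto (slope φ 0) (𝓝[>] 0) (𝓝 dd) :=
    (hasDerivAt_iff_tendsto_slope.1 h).mono_left
      (nhdsWithin_mono 0 fun t ht => ne_of_gt ht)
  refine le_of_tendsto hs ?_
  filter_upwards [hmem] with t ht
  have hsl : slope φ 0 t = (φ t - φ 0) / t := by
    simp [slope_def_field]
  rw [hsl]; exact hm t ht

lemma deriv_ge_of_slopes {φ : ℝ → ℝ} {dd m : ℝ} (h : HasDerivAt φ dd 0)
    (hm : ∀ t ∈ Set.Ioc (0:ℝ) 1, m ≤ (φ t - φ 0) / t) : m ≤ dd := by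
  have := deriv_le_of_slopes h.neg (m := -m) (fun t ht => by
    have := hm t ht
    rw [show ((-φ) t - (-φ) 0) / t = -((φ t - φ 0)/t) by simp only [Pi.neg_apply]; ring]
    linarith)
  linarith

/-- First-order inequality for concave functions. -/
lemma concave_grad {m : ℕ} {Y : Set (Euc m)} {φ : Euc m → ℝ}
    (hc : ConcaveOn ℝ Y φ) {gb a b : Euc m} (ha : a ∈ Y) (hb : b ∈ Y)
    (hg : HasGradientAt φ gb b) :
    φ a - φ b ≤ (inner ℝ gb (a - b) : ℝ) := by
  refine deriv_ge_of_slopes (grad_line_hasDerivAt b hg (a - b)) ?_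
  intro t ht
  have hmem : b + t • (a - b) = (1 - t) • b + t • a := by module
  have hcc := hc.2 hb ha (by linarith [ht.2] : (0:ℝ) ≤ 1 - t) ht.1.le (by ring)
  simp only [zero_smul, add_zero]
  rw [le_div_iff₀ ht.1, hmem]
  simp only [smul_eq_mul] at hcc
  nlinarith [hcc]

/-- Dual error bound for Perturbed GDA: for every `t ≥ 1`,
`‖ỹ*(x_t) − y_t‖ ≤ ((1 + α(ℓ + r_y))/(α r_y))·‖y_t − y_{t−1}‖`. -/
theorem perturbed_gda_dual_error_bound
    (n d : ℕ) (f : Euc n → Euc d → ℝ) (gx : Euc n → Euc d → Euc n)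
    (gy : Euc n → Euc d → Euc d) (X : Set (Euc n)) (Y : Set (Euc d))
    (l Dy ry α c : ℝ)
    (projX : Euc n → Euc n) (projY : Euc d → Euc d)
    (xs : ℕ → Euc n) (ys : ℕ → Euc d) (ystar : Euc n → Euc d)
    (hl : 0 < l) (hDy : 0 < Dy) (hry : 0 < ry) (hα : 0 < α) (hc : 0 < c)
    (hsmooth : LSmooth f gx gy l) (hstand : Standing f X Y Dy)
    (hprojX : IsProjection X projX) (hprojY : IsProjection Y projY)
    -- Perturbed GDA iterations
    (hx0 : xs 0 ∈ X) (hy0 : ys 0 ∈ Y)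
    (hxrec : ∀ t, xs (t + 1) = projX (xs t - c • gx (xs t) (ys t)))
    (hyrec : ∀ t, ys (t + 1) = projY (ys t + α • (gy (xs (t + 1)) (ys t) - ry • ys t)))
    -- ỹ*(x): maximizer of f̃(x,·) over Y
    (hystar : ∀ x, ystar x ∈ Y ∧
      ∀ y ∈ Y, f x y - ry / 2 * ‖y‖ ^ 2 ≤ f x (ystar x) - ry / 2 * ‖ystar x‖ ^ 2) :
    ∀ t : ℕ, ‖ystar (xs (t + 1)) - ys (t + 1)‖ ≤
      (1 + α * (l + ry)) / (α * ry) * ‖ys (t + 1) - ys t‖ := by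
  obtain ⟨hXcl, hXconv, hYne, hYcp, hYconv, hY0, hYdiam, hconc⟩ := hstand
  obtain ⟨hgx, hgy, hlipx, hlipy⟩ := hsmooth
  have hysY : ∀ t, ys t ∈ Y := by
    intro t
    cases t with
    | zero => exact hy0
    | succ t => rw [hyrec t]; exact (hprojY _).1
  intro t
  set x := xs (t + 1) with hxdef
  set y := ys t with hydef
  set yp := ys (t + 1) with hypdef
  set z := ystar x with hzdef
  have hxX : x ∈ X := by rw [hxdef, hxrec t]; exact (hprojX _).1
  have hyY : y ∈ Y := hysY t
  have hypY : yp ∈ Y := hysY (t + 1)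
  have hzY : z ∈ Y := (hystar x).1
  have hconcx : ConcaveOn ℝ Y (f x) := hconc x hxX
  -- monotonicity of the concave gradient
  have hmono : (inner ℝ (gy x yp - gy x z) (yp - z) : ℝ) ≤ 0 := by
    have h1 := concave_grad hconcx hypY hzY (hgy x z)
    have h2 := concave_grad hconcx hzY hypY (hgy x yp)
    have h3 : (inner ℝ (gy x yp) (z - yp) : ℝ) = -inner ℝ (gy x yp) (yp - z) := by
      rw [← inner_neg_right, neg_sub]
    rw [inner_sub_left]
    rw [h3] at h2
    linarith
  -- first-order optimality of z for the perturbed objective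
  have hopt : (inner ℝ (gy x z) (yp - z) : ℝ) - ry * inner ℝ z (yp - z) ≤ 0 := by
    set v := yp - z with hvdef
    have hd1 : HasDerivAt (fun t : ℝ => f x (z + t • v)) (inner ℝ (gy x z) v : ℝ) 0 :=
      grad_line_hasDerivAt z (hgy x z) v
    have hd2 : HasDerivAt (fun t : ℝ => ry / 2 * ‖z + t • v‖ ^ 2)
        (ry / 2 * (2 * inner ℝ z v)) 0 := by
      have := ((line_hasDerivAt z v).norm_sq).const_mul (ry / 2)
      simpa using this
    have hd : HasDerivAt (fun t : ℝ => f x (z + t • v) - ry / 2 * ‖z + t • v‖ ^ 2)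
        ((inner ℝ (gy x z) v : ℝ) - ry * inner ℝ z v) 0 := by
      have := hd1.sub hd2
      rw [show (inner ℝ (gy x z) v : ℝ) - ry * inner ℝ z v = inner ℝ (gy x z) v - ry / 2 * (2 * inner ℝ z v) by ring]
      exact this
    refine deriv_le_of_slopes hd ?_
    intro s hs
    have hmem : z + s • v ∈ Y := by
      have : z + s • v = (1 - s) • z + s • yp := by rw [hvdef]; module
      rw [this]
      exact hYconv hzY hypY (by linarith [hs.2]) hs.1.le (by ring)
    have hle := (hystar x).2 _ hmem
    simp only [zero_smul, add_zero]
    apply div_nonpos_of_nonpos_of_nonneg _ hs.1.le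
    linarith [hle]
  -- projection inequality
  have hproj : (inner ℝ (y + α • (gy x y - ry • y) - yp) (z - yp) : ℝ) ≤ 0 := by
    have := (hprojY (y + α • (gy x y - ry • y))).2 z hzY
    rw [hypdef, hyrec t]
    exact this
  -- Lipschitz bound
  have hlip : ‖(gy x yp - ry • yp) - (gy x y - ry • y)‖ ≤ (l + ry) * ‖yp - y‖ := by
    have h1 : (gy x yp - ry • yp) - (gy x y - ry • y)
        = (gy x yp - gy x y) - ry • (yp - y) := by module
    rw [h1]
    calc ‖(gy x yp - gy x y) - ry • (yp - y)‖
        ≤ ‖gy x yp - gy x y‖ + ‖ry • (yp - y)‖ := norm_sub_le _ _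
      _ ≤ l * (‖x - x‖ + ‖yp - y‖) + ry * ‖yp - y‖ := by
          rw [norm_smul]
          gcongr
          · exact hlipy x x yp y
          · simp [abs_of_pos hry]
      _ = (l + ry) * ‖yp - y‖ := by rw [sub_self, norm_zero, zero_add]; ring
  -- Cauchy–Schwarz consequences
  have ha4 : (inner ℝ ((gy x yp - ry • yp) - (gy x y - ry • y)) (z - yp) : ℝ)
      ≤ (l + ry) * ‖yp - y‖ * ‖yp - z‖ := by
    calc (inner ℝ ((gy x yp - ry • yp) - (gy x y - ry • y)) (z - yp) : ℝ)
        ≤ ‖(gy x yp - ry • yp) - (gy x y - ry • y)‖ * ‖z - yp‖ := real_inner_le_norm _ _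
      _ ≤ ((l + ry) * ‖yp - y‖) * ‖z - yp‖ :=
          mul_le_mul_of_nonneg_right hlip (norm_nonneg _)
      _ = (l + ry) * ‖yp - y‖ * ‖yp - z‖ := by rw [norm_sub_rev z yp]
  have ha5 : (inner ℝ (yp - y) (z - yp) : ℝ) ≤ ‖yp - y‖ * ‖yp - z‖ := by
    calc (inner ℝ (yp - y) (z - yp) : ℝ) ≤ ‖yp - y‖ * ‖z - yp‖ := real_inner_le_norm _ _
      _ = ‖yp - y‖ * ‖yp - z‖ := by rw [norm_sub_rev z yp]
  have ha6 : (inner ℝ (yp - z) (yp - z) : ℝ) = ‖yp - z‖ ^ 2 := real_inner_self_eq_norm_sq _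
  -- combine everything
  have key : α * ry * ‖yp - z‖ ^ 2 ≤ (1 + α * (l + ry)) * (‖yp - y‖ * ‖yp - z‖) := by
    simp only [inner_sub_left, inner_sub_right, inner_add_left, inner_add_right,
      real_inner_smul_left, real_inner_smul_right] at hmono hopt hproj ha4 ha5 ha6
    rw [real_inner_comm yp z] at hopt ha6
    have m1 := mul_le_mul_of_nonneg_left hmono hα.le
    have mopt := mul_le_mul_of_nonneg_left hopt hα.le
    have m4 := mul_le_mul_of_nonneg_left ha4 hα.le
    have m6 := congrArg (fun r => α * ry * r) ha6
    nlinarith [m1, mopt, hproj, m4, ha5, m6]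
  have hnorm : ‖ys (t+1) - ys t‖ = ‖yp - y‖ := rfl
  rw [hnorm]
  have hgoal : ‖z - yp‖ = ‖yp - z‖ := norm_sub_rev _ _
  rw [show ystar (xs (t+1)) - ys (t+1) = z - yp from rfl, hgoal]
  rcases eq_or_lt_of_le (norm_nonneg (yp - z)) with h0 | hpos
  · rw [← h0]
    positivity
  · have hαry : 0 < α * ry := mul_pos hα hry
    rw [div_mul_eq_mul_div, le_div_iff₀ hαry]
    have h2 : ‖yp - z‖ * (α * ry) * ‖yp - z‖ ≤ ((1 + α * (l + ry)) * ‖yp - y‖) * ‖yp - z‖ := by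
      have hQ : ‖yp - z‖ * (α * ry) * ‖yp - z‖ = α * ry * ‖yp - z‖ ^ 2 := by ring
      have hN : ((1 + α * (l + ry)) * ‖yp - y‖) * ‖yp - z‖
          = (1 + α * (l + ry)) * (‖yp - y‖ * ‖yp - z‖) := by ring
      rw [hQ, hN]
      exact key
    exact le_of_mul_le_mul_right h2 hpos
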